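/- arXiv:1403.3486 — 3 statements merged into one kernel-verified Lean document; each statement's English description precedes it below -/
import Mathlib

section
/- For every real number r ≥ 0, the series ∑_{j=1}^∞ e^{-r/j}/(j(j+1)) is bounded below by e^{-1}/(r+1). -/
lemma tele_hasSum (m : ℕ) :
    HasSum (fun j : ℕ => 1 / (((j : ℝ) + m + 1) * ((j : ℝ) + m + 2))) (1 / ((m : ℝ) + 1)) := by
  have hpos : ∀ j : ℕ, (0:ℝ) ≤ 1 / (((j : ℝ) + m + 1) * ((j : ℝ) + m + 2)) := by
    intro j
    positivity
  rw [hasSum_iff_tendsto_nat_of_nonneg hpos]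
  have key : ∀ n : ℕ, ∑ i ∈ Finset.range n, 1 / (((i : ℝ) + m + 1) * ((i : ℝ) + m + 2))
      = 1 / ((m : ℝ) + 1) - 1 / ((n : ℝ) + m + 1) := by
    intro n
    calc ∑ i ∈ Finset.range n, 1 / (((i : ℝ) + m + 1) * ((i : ℝ) + m + 2))
        = ∑ i ∈ Finset.range n,
            ((fun i : ℕ => 1 / ((i : ℝ) + m + 1)) i - (fun i : ℕ => 1 / ((i : ℝ) + m + 1)) (i + 1)) := by
          apply Finset.sum_congr rfl
          intro i _
          have h1 : (0:ℝ) < (i : ℝ) + m + 1 := by positivity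
          have h2 : (0:ℝ) < (i : ℝ) + m + 2 := by positivity
          push_cast
          have h3 : (i:ℝ) + 1 + ↑m + 1 = (i:ℝ) + ↑m + 2 := by ring
          rw [h3, div_sub_div _ _ h1.ne' h2.ne']
          congr 1
          ring
      _ = (fun i : ℕ => 1 / ((i : ℝ) + m + 1)) 0 - (fun i : ℕ => 1 / ((i : ℝ) + m + 1)) n :=
          Finset.sum_range_sub' _ n
      _ = 1 / ((m : ℝ) + 1) - 1 / ((n : ℝ) + m + 1) := by norm_num
  simp only [key]
  have h0 : Filter.Tendsto (fun n : ℕ => 1 / ((n : ℝ) + m + 1)) Filter.atTop (nhds 0) := by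
    have ht : Filter.Tendsto (fun n : ℕ => (n : ℝ) + m + 1) Filter.atTop Filter.atTop := by
      apply Filter.tendsto_atTop_add_const_right
      apply Filter.tendsto_atTop_add_const_right
      exact tendsto_natCast_atTop_atTop
    simpa [one_div, Pi.inv_def] using ht.inv_tendsto_atTop
  have := (tendsto_const_nhds (x := 1 / ((m : ℝ) + 1)) (f := Filter.atTop (α := ℕ))).sub h0
  simpa using this

/-- For every real `r ≥ 0`, `∑_{j=1}^∞ e^{-r/j}/(j(j+1)) ≥ e^{-1}/(r+1)`. -/
theorem series_exp_lower_bound (r : ℝ) (hr : 0 ≤ r) :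
    Real.exp (-1) / (r + 1) ≤
      ∑' j : ℕ, Real.exp (-r / (j + 1)) / (((j : ℝ) + 1) * ((j : ℝ) + 2)) := by
  set f : ℕ → ℝ := fun j => Real.exp (-r / (j + 1)) / (((j : ℝ) + 1) * ((j : ℝ) + 2)) with hf_def
  have hf0 : ∀ j, 0 ≤ f j := by
    intro j
    have : (0:ℝ) < ((j : ℝ) + 1) * ((j : ℝ) + 2) := by positivity
    positivity
  have hfle : ∀ j, f j ≤ 1 / (((j : ℝ) + 1) * ((j : ℝ) + 2)) := by
    intro j
    simp only [hf_def]
    have hD : (0:ℝ) ≤ ((j : ℝ) + 1) * ((j : ℝ) + 2) := by positivity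
    exact div_le_div_of_nonneg_right
      (Real.exp_le_one_iff.mpr (div_nonpos_iff.mpr (Or.inr ⟨by linarith, by positivity⟩))) hD
  have hg : Summable (fun j : ℕ => 1 / (((j : ℝ) + 1) * ((j : ℝ) + 2))) := by
    have := tele_hasSum 0
    simpa using this.summable
  have hf : Summable f := Summable.of_nonneg_of_le hf0 hfle hg
  -- choose m with r ≤ m + 1 ≤ r + 1
  set m : ℕ := ⌈r⌉₊ - 1 with hm_def
  have hm1 : r ≤ (m : ℝ) + 1 := by
    rcases Nat.eq_zero_or_pos ⌈r⌉₊ with h | h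
    · have : r ≤ 0 := by exact_mod_cast Nat.ceil_eq_zero.mp h
      simp [hm_def, h]
      linarith
    · have : m + 1 = ⌈r⌉₊ := by omega
      have := Nat.le_ceil r
      calc r ≤ (⌈r⌉₊ : ℝ) := Nat.le_ceil r
        _ = (m : ℝ) + 1 := by exact_mod_cast (by omega : ⌈r⌉₊ = m + 1)
  have hm2 : (m : ℝ) + 1 ≤ r + 1 := by
    rcases Nat.eq_zero_or_pos ⌈r⌉₊ with h | h
    · simp [hm_def, h]; linarith
    · have hceil : (⌈r⌉₊ : ℝ) < r + 1 := Nat.ceil_lt_add_one hr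
      have : (m : ℝ) + 1 = (⌈r⌉₊ : ℝ) := by exact_mod_cast (by omega : m + 1 = ⌈r⌉₊)
      linarith
  -- lower bound tail
  have htail : Summable (fun j : ℕ => f (j + m)) := (summable_nat_add_iff m).mpr hf
  have hshift : ∑ i ∈ Finset.range m, f i + ∑' j : ℕ, f (j + m) = ∑' j, f j :=
    hf.sum_add_tsum_nat_add m
  have hrange : 0 ≤ ∑ i ∈ Finset.range m, f i := Finset.sum_nonneg fun i _ => hf0 i
  have hcompare : Real.exp (-1) * (1 / ((m : ℝ) + 1)) ≤ ∑' j : ℕ, f (j + m) := by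
    have hb := (tele_hasSum m).mul_left (Real.exp (-1))
    refine hb.tsum_eq ▸ Summable.tsum_le_tsum ?_ hb.summable htail
    intro j
    simp only [hf_def]
    push_cast
    have hd : (0:ℝ) < (j:ℝ) + m + 1 := by positivity
    have hr' : r ≤ (j:ℝ) + m + 1 := by linarith
    have hexp : Real.exp (-1) ≤ Real.exp (-r / ((j:ℝ) + m + 1)) := by
      apply Real.exp_le_exp.mpr
      rw [neg_div, neg_le_neg_iff]
      exact (div_le_one hd).mpr hr'
    have hD : (0:ℝ) ≤ ((j:ℝ) + m + 1) * ((j:ℝ) + m + 2) := by positivity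
    rw [mul_one_div]
    exact div_le_div_of_nonneg_right hexp hD
  have hfinal : Real.exp (-1) / (r + 1) ≤ Real.exp (-1) * (1 / ((m : ℝ) + 1)) := by
    rw [mul_one_div]
    apply div_le_div_of_nonneg_left (Real.exp_pos _).le (by positivity) hm2
  calc Real.exp (-1) / (r + 1) ≤ Real.exp (-1) * (1 / ((m : ℝ) + 1)) := hfinal
    _ ≤ ∑' j : ℕ, f (j + m) := hcompare
    _ ≤ ∑' j, f j := by linarith
end

section
/- Let d ≥ 1, 0 < α < 2, and 0 < s ≤ 1 ≤ r. There is a constant c depending only on d such that for every measurable f : ℝ^d → ℝ with ∫∫_{|x-y|≤ s} (f(x)-f(y))^2 |x-y|^{-d-α} dx dy < ∞ and f integrable on B(0, r+1), one has ∫_{B(0,r)} f(x)^2 dx ≤ c [ (s^{d+α}/|B(0,s)|) ∫∫_{|x-y| ≤ s} (f(x)-f(y))^2 |x-y|^{-d-α} dx dy + (1/|B(0,s)|) (∫_{B(0,r+1)} |f(z)| dz)^2 ]. -/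
open MeasureTheory Metric

/-- Cauchy–Schwarz for the Lebesgue integral of `ℝ≥0∞`-valued functions. -/
lemma lintegral_sq_le_meas_mul {α : Type*} [MeasurableSpace α] (μ : Measure α)
    {g : α → ENNReal} (hg : AEMeasurable g μ) :
    (∫⁻ a, g a ∂μ) ^ 2 ≤ μ Set.univ * ∫⁻ a, (g a) ^ 2 ∂μ := by
  have hpq : (2:ℝ).HolderConjugate 2 := Real.HolderConjugate.two_two
  have h := ENNReal.lintegral_mul_le_Lp_mul_Lq μ hpq hg
    (aemeasurable_const (b := (1:ENNReal)))
  simp only [Pi.mul_apply, mul_one, ENNReal.one_rpow, lintegral_one] at h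
  have h2 : (∫⁻ a, g a ∂μ) ^ 2 ≤
      ((∫⁻ a, g a ^ (2:ℝ) ∂μ) ^ (1/(2:ℝ)) * (μ Set.univ) ^ (1/(2:ℝ))) ^ 2 := by
    gcongr
  refine h2.trans_eq ?_
  rw [mul_pow, ← ENNReal.rpow_natCast (_ ^ (1/(2:ℝ))) 2,
    ← ENNReal.rpow_natCast ((μ Set.univ) ^ (1/(2:ℝ))) 2,
    ← ENNReal.rpow_mul, ← ENNReal.rpow_mul]
  norm_num
  exact mul_comm _ _

/-- General form of the local super Poincaré inequality, over a finite-dimensional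
normed space with an additive Haar measure. -/
lemma local_super_poincare_aux {E : Type*} [NormedAddCommGroup E] [NormedSpace ℝ E]
    [MeasurableSpace E] [BorelSpace E] [FiniteDimensional ℝ E]
    (μ : Measure E) [μ.IsAddHaarMeasure] (p s r : ℝ) (hppos : 0 < p)
    (hs : 0 < s) (hs1 : s ≤ 1) (hr : 1 ≤ r)
    (f : E → ℝ) (hf : Measurable f)
    (hI : (∫⁻ x, ∫⁻ y in closedBall x s,
        ENNReal.ofReal ((f x - f y) ^ 2 * ‖x - y‖ ^ (-p)) ∂μ ∂μ) ≠ ⊤)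
    (hfi : IntegrableOn f (ball (0 : E) (r + 1)) μ) :
    ∫ x in ball (0 : E) r, (f x) ^ 2 ∂μ ≤
      2 * (s ^ p / (μ (ball (0 : E) s)).toReal *
            (∫⁻ x, ∫⁻ y in closedBall x s,
              ENNReal.ofReal ((f x - f y) ^ 2 * ‖x - y‖ ^ (-p)) ∂μ ∂μ).toReal +
          (μ (ball (0 : E) s)).toReal⁻¹ *
            (∫ z in ball (0 : E) (r + 1), |f z| ∂μ) ^ 2) := by
  set V : ENNReal := μ (ball (0 : E) s) with hVdef
  set I : ENNReal := ∫⁻ x, ∫⁻ y in closedBall x s,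
      ENNReal.ofReal ((f x - f y) ^ 2 * ‖x - y‖ ^ (-p)) ∂μ ∂μ with hIdef
  set L : ℝ := ∫ z in ball (0 : E) (r + 1), |f z| ∂μ with hLdef
  have hV0 : V ≠ 0 := (measure_ball_pos μ 0 hs).ne'
  have hVtop : V ≠ ⊤ := measure_ball_lt_top.ne
  have hVt0 : 0 < V.toReal := ENNReal.toReal_pos hV0 hVtop
  have hL0 : 0 ≤ L := integral_nonneg fun z => abs_nonneg _
  have hball : ∀ x : E, μ (ball x s) = V := fun x =>
    Measure.addHaar_ball_center μ x s
  have hsub : ∀ x ∈ ball (0 : E) r, ball x s ⊆ ball (0 : E) (r + 1) := by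
    intro x hx y hy
    rw [mem_ball] at *
    calc dist y 0 ≤ dist y x + dist x 0 := dist_triangle _ _ _
      _ < s + r := add_lt_add hy hx
      _ ≤ 1 + r := by linarith
      _ = r + 1 := by ring
  have hfint : ∀ x ∈ ball (0 : E) r, IntegrableOn f (ball x s) μ :=
    fun x hx => hfi.mono_set (hsub x hx)
  -- the ball average
  set F : E → ℝ := fun x => (V.toReal)⁻¹ * ∫ y in ball x s, f y ∂μ with hFdef
  -- auxiliary lintegrals
  set Q : E → ENNReal := fun x => ∫⁻ y in ball x s,
      ENNReal.ofReal ((f x - f y) ^ 2) ∂μ with hQdef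
  set W : E → ENNReal := fun x => ∫⁻ y in ball x s,
      ENNReal.ofReal |f y| ∂μ with hWdef
  have hVinv : ENNReal.ofReal (V.toReal)⁻¹ = V⁻¹ := by
    rw [ENNReal.ofReal_inv_of_pos hVt0, ENNReal.ofReal_toReal hVtop]
  -- Step 1 pointwise : distance to the average controlled by Q
  have step1 : ∀ x ∈ ball (0 : E) r,
      ENNReal.ofReal ((f x - F x) ^ 2) ≤ V⁻¹ * Q x := by
    intro x hx
    have hint : IntegrableOn f (ball x s) μ := hfint x hx
    have hconst : IntegrableOn (fun _ : E => f x) (ball x s) μ := by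
      refine integrableOn_const ?_
      rw [hball x]; exact hVtop
    have hsubint : IntegrableOn (fun y => f x - f y) (ball x s) μ := hconst.sub hint
    have hVne : V.toReal ≠ 0 := hVt0.ne'
    have havg : f x - F x = V.toReal⁻¹ * ∫ y in ball x s, (f x - f y) ∂μ := by
      rw [integral_sub hconst hint, setIntegral_const, measureReal_def, hball x, hFdef]
      simp only [smul_eq_mul]
      field_simp
    set N : ℝ := ∫ y in ball x s, |f x - f y| ∂μ with hNdef
    have hN0 : 0 ≤ N := integral_nonneg fun y => abs_nonneg _
    have habs : |f x - F x| ≤ V.toReal⁻¹ * N := by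
      rw [havg, abs_mul, abs_of_nonneg (inv_nonneg.2 ENNReal.toReal_nonneg)]
      refine mul_le_mul_of_nonneg_left ?_ (inv_nonneg.2 ENNReal.toReal_nonneg)
      simpa [Real.norm_eq_abs] using
        norm_integral_le_integral_norm (μ := μ.restrict (ball x s))
          (fun y => f x - f y)
    have hNl : ENNReal.ofReal N = ∫⁻ y in ball x s, ENNReal.ofReal |f x - f y| ∂μ :=
      ofReal_integral_eq_lintegral_ofReal hsubint.abs
        (Filter.Eventually.of_forall fun y => abs_nonneg _)
    have hCS : (ENNReal.ofReal N) ^ 2 ≤ V * Q x := by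
      rw [hNl]
      have hcs := lintegral_sq_le_meas_mul (μ.restrict (ball x s))
        (g := fun y => ENNReal.ofReal |f x - f y|)
        ((measurable_const.sub hf).abs.ennreal_ofReal).aemeasurable
      rw [Measure.restrict_apply_univ, hball x] at hcs
      refine hcs.trans_eq ?_
      congr 1
      refine lintegral_congr fun y => ?_
      rw [← ENNReal.ofReal_pow (abs_nonneg _), sq_abs]
    have hcan : V⁻¹ * V = 1 := ENNReal.inv_mul_cancel hV0 hVtop
    calc ENNReal.ofReal ((f x - F x) ^ 2)
        ≤ ENNReal.ofReal ((V.toReal⁻¹ * N) ^ 2) := by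
          refine ENNReal.ofReal_le_ofReal ?_
          rw [← sq_abs (f x - F x)]
          exact pow_le_pow_left₀ (abs_nonneg _) habs 2
      _ = (V⁻¹) ^ 2 * (ENNReal.ofReal N) ^ 2 := by
          rw [mul_pow, ENNReal.ofReal_mul (by positivity),
            ENNReal.ofReal_pow (inv_nonneg.2 ENNReal.toReal_nonneg),
            ENNReal.ofReal_pow hN0, hVinv]
      _ ≤ (V⁻¹) ^ 2 * (V * Q x) := mul_le_mul_right hCS _
      _ = (V⁻¹ * V) * (V⁻¹ * Q x) := by ring
      _ = V⁻¹ * Q x := by rw [hcan, one_mul]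
  -- Step 1' : Q controlled by the Dirichlet integrand
  have step1' : ∀ x : E, Q x ≤ ENNReal.ofReal (s ^ p) *
      ∫⁻ y in closedBall x s,
        ENNReal.ofReal ((f x - f y) ^ 2 * ‖x - y‖ ^ (-p)) ∂μ := by
    intro x
    have hmono : Q x ≤ ∫⁻ y in ball x s,
        ENNReal.ofReal (s ^ p * ((f x - f y) ^ 2 * ‖x - y‖ ^ (-p))) ∂μ := by
      refine setLIntegral_mono' measurableSet_ball fun y hy => ?_
      refine ENNReal.ofReal_le_ofReal ?_
      rcases eq_or_ne y x with hxy | hxy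
      · subst hxy; simp
      · have hn0 : 0 < ‖x - y‖ := by
          rw [norm_pos_iff, sub_ne_zero]; exact hxy.symm
        have hns : ‖x - y‖ ≤ s := by
          rw [mem_ball, dist_eq_norm] at hy
          rw [norm_sub_rev]; exact hy.le
        have h1 : s ^ (-p) ≤ ‖x - y‖ ^ (-p) :=
          Real.rpow_le_rpow_of_nonpos hn0 hns (neg_nonpos.2 hppos.le)
        have h0 : (1:ℝ) ≤ s ^ p * ‖x - y‖ ^ (-p) := by
          have := mul_le_mul_of_nonneg_left h1 (Real.rpow_nonneg hs.le p)
          rwa [← Real.rpow_add hs, add_neg_cancel, Real.rpow_zero] at this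
        have h2 := mul_le_mul_of_nonneg_left h0 (sq_nonneg (f x - f y))
        rw [mul_one] at h2
        ring_nf at h2 ⊢
        linarith
    calc Q x ≤ _ := hmono
      _ = ENNReal.ofReal (s ^ p) * ∫⁻ y in ball x s,
            ENNReal.ofReal ((f x - f y) ^ 2 * ‖x - y‖ ^ (-p)) ∂μ := by
          simp_rw [ENNReal.ofReal_mul (Real.rpow_nonneg hs.le p)]
          rw [lintegral_const_mul' _ _ ENNReal.ofReal_ne_top]
      _ ≤ _ := mul_le_mul_right (lintegral_mono_set ball_subset_closedBall) _
  -- Step 2 pointwise : the average controlled by W and L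
  have step2 : ∀ x ∈ ball (0 : E) r,
      ENNReal.ofReal (F x ^ 2) ≤ (V⁻¹ * ENNReal.ofReal L) * (V⁻¹ * W x) := by
    intro x hx
    have hint : IntegrableOn f (ball x s) μ := hfint x hx
    set M : ℝ := ∫ y in ball x s, |f y| ∂μ with hMdef
    have hM0 : 0 ≤ M := integral_nonneg fun y => abs_nonneg _
    have hFM : |F x| ≤ V.toReal⁻¹ * M := by
      rw [hFdef]
      simp only
      rw [abs_mul, abs_of_nonneg (inv_nonneg.2 ENNReal.toReal_nonneg)]
      refine mul_le_mul_of_nonneg_left ?_ (inv_nonneg.2 ENNReal.toReal_nonneg)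
      simpa [Real.norm_eq_abs] using
        norm_integral_le_integral_norm (μ := μ.restrict (ball x s)) f
    have hML : M ≤ L := by
      rw [hMdef, hLdef]
      exact setIntegral_mono_set hfi.abs
        (Filter.Eventually.of_forall fun y => abs_nonneg _)
        ((hsub x hx).eventuallyLE)
    have hWM : ENNReal.ofReal M = W x :=
      ofReal_integral_eq_lintegral_ofReal hint.abs
        (Filter.Eventually.of_forall fun y => abs_nonneg _)
    have hbase : ENNReal.ofReal |F x| ≤ V⁻¹ * ENNReal.ofReal M := by
      calc ENNReal.ofReal |F x| ≤ ENNReal.ofReal (V.toReal⁻¹ * M) :=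
            ENNReal.ofReal_le_ofReal hFM
        _ = V⁻¹ * ENNReal.ofReal M := by
            rw [ENNReal.ofReal_mul (inv_nonneg.2 ENNReal.toReal_nonneg), hVinv]
    have h1 : ENNReal.ofReal |F x| ≤ V⁻¹ * W x := by rw [← hWM]; exact hbase
    have h2 : ENNReal.ofReal |F x| ≤ V⁻¹ * ENNReal.ofReal L :=
      hbase.trans (mul_le_mul_right (ENNReal.ofReal_le_ofReal hML) _)
    calc ENNReal.ofReal (F x ^ 2)
        = ENNReal.ofReal |F x| * ENNReal.ofReal |F x| := by
          rw [← ENNReal.ofReal_mul (abs_nonneg _), abs_mul_abs_self, ← pow_two]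
      _ ≤ (V⁻¹ * ENNReal.ofReal L) * (V⁻¹ * W x) := mul_le_mul' h2 h1
  -- measurability of Q and W
  have hSd : MeasurableSet {q : E × E | dist q.2 q.1 < s} :=
    measurableSet_lt (measurable_snd.dist measurable_fst) measurable_const
  have indic_eq : ∀ (g : E × E → ENNReal) (x : E),
      (∫⁻ y in ball x s, g (x, y) ∂μ) =
      ∫⁻ y, Set.indicator {q : E × E | dist q.2 q.1 < s} g (x, y) ∂μ := by
    intro g x
    rw [← lintegral_indicator measurableSet_ball]
    refine lintegral_congr fun y => ?_
    by_cases hy : y ∈ ball x s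
    · rw [Set.indicator_of_mem hy, Set.indicator_of_mem (by simpa [mem_ball] using hy)]
    · rw [Set.indicator_of_notMem hy, Set.indicator_of_notMem
        (by simpa [mem_ball] using hy)]
  have hQm : Measurable Q := by
    have hQeq : Q = fun x => ∫⁻ y, Set.indicator {q : E × E | dist q.2 q.1 < s}
        (fun q => ENNReal.ofReal ((f q.1 - f q.2) ^ 2)) (x, y) ∂μ := by
      funext x
      exact indic_eq (fun q => ENNReal.ofReal ((f q.1 - f q.2) ^ 2)) x
    rw [hQeq]
    exact Measurable.lintegral_prod_right'
      (Measurable.indicator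
        (((hf.comp measurable_fst).sub (hf.comp measurable_snd)).pow_const 2).ennreal_ofReal hSd)
  have hWm : Measurable W := by
    have hWeq : W = fun x => ∫⁻ y, Set.indicator {q : E × E | dist q.2 q.1 < s}
        (fun q => ENNReal.ofReal |f q.2|) (x, y) ∂μ := by
      funext x
      exact indic_eq (fun q => ENNReal.ofReal |f q.2|) x
    rw [hWeq]
    exact Measurable.lintegral_prod_right'
      (Measurable.indicator ((hf.comp measurable_snd).abs.ennreal_ofReal) hSd)
  -- Fubini bound
  have fub : ∫⁻ x in ball (0 : E) r, W x ∂μ ≤ V * ENNReal.ofReal L := by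
    set T : Set (E × E) := {q : E × E | dist q.2 q.1 < s ∧ q.2 ∈ ball (0 : E) (r + 1)}
      with hTdef
    have hT : MeasurableSet T :=
      hSd.inter (measurable_snd measurableSet_ball)
    set k : E × E → ENNReal := T.indicator (fun q => ENNReal.ofReal |f q.2|) with hkdef
    have hkm : Measurable k :=
      Measurable.indicator ((hf.comp measurable_snd).abs.ennreal_ofReal) hT
    -- on the ball, W coincides with the k-integral
    have hWk : ∀ x ∈ ball (0 : E) r, W x = ∫⁻ y, k (x, y) ∂μ := by
      intro x hx
      rw [hWdef]
      simp only [hkdef]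
      rw [← lintegral_indicator measurableSet_ball]
      refine lintegral_congr fun y => ?_
      by_cases hy : y ∈ ball x s
      · rw [Set.indicator_of_mem hy, Set.indicator_of_mem]
        exact ⟨by simpa [mem_ball] using hy, hsub x hx hy⟩
      · rw [Set.indicator_of_notMem hy, Set.indicator_of_notMem]
        intro hmem
        exact hy (by simpa [mem_ball] using hmem.1)
    calc ∫⁻ x in ball (0 : E) r, W x ∂μ
        = ∫⁻ x in ball (0 : E) r, (∫⁻ y, k (x, y) ∂μ) ∂μ :=
          setLIntegral_congr_fun measurableSet_ball
            hWk
      _ ≤ ∫⁻ x, (∫⁻ y, k (x, y) ∂μ) ∂μ := setLIntegral_le_lintegral _ _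
      _ = ∫⁻ y, (∫⁻ x, k (x, y) ∂μ) ∂μ := by
          exact lintegral_lintegral_swap hkm.aemeasurable
      _ = ∫⁻ y, (Set.indicator (ball (0 : E) (r + 1))
            (fun z => ENNReal.ofReal |f z|) y) * V ∂μ := by
          refine lintegral_congr fun y => ?_
          have hky : ∀ x : E, k (x, y) = Set.indicator (ball y s)
              (fun _ => Set.indicator (ball (0 : E) (r + 1))
                (fun z => ENNReal.ofReal |f z|) y) x := by
            intro x
            simp only [hkdef, hTdef, Set.indicator_apply, Set.mem_setOf_eq, mem_ball,
              dist_zero_right]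
            by_cases h1 : dist y x < s <;> by_cases h2 : ‖y‖ < r + 1 <;>
              simp [h1, h2, dist_comm x y, Set.indicator_apply, mem_ball, dist_zero_right]
          simp_rw [hky]
          rw [lintegral_indicator measurableSet_ball, setLIntegral_const, hball y]
      _ = V * ∫⁻ y in ball (0 : E) (r + 1), ENNReal.ofReal |f y| ∂μ := by
          rw [lintegral_mul_const' V _ hVtop,
            lintegral_indicator measurableSet_ball, mul_comm]
      _ = V * ENNReal.ofReal L := by
          rw [← ofReal_integral_eq_lintegral_ofReal hfi.abs
            (Filter.Eventually.of_forall fun z => abs_nonneg _)]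
  -- bound on the Q-integral
  have hQint : ∫⁻ x in ball (0 : E) r, Q x ∂μ ≤ ENNReal.ofReal (s ^ p) * I := by
    calc ∫⁻ x in ball (0 : E) r, Q x ∂μ
        ≤ ∫⁻ x in ball (0 : E) r, ENNReal.ofReal (s ^ p) *
            (∫⁻ y in closedBall x s,
              ENNReal.ofReal ((f x - f y) ^ 2 * ‖x - y‖ ^ (-p)) ∂μ) ∂μ :=
          lintegral_mono fun x => step1' x
      _ = ENNReal.ofReal (s ^ p) * ∫⁻ x in ball (0 : E) r,
            (∫⁻ y in closedBall x s,
              ENNReal.ofReal ((f x - f y) ^ 2 * ‖x - y‖ ^ (-p)) ∂μ) ∂μ :=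
          lintegral_const_mul' _ _ ENNReal.ofReal_ne_top
      _ ≤ ENNReal.ofReal (s ^ p) * I :=
          mul_le_mul_right (setLIntegral_le_lintegral _ _) _
  -- main chain in ENNReal
  have main : (∫⁻ x in ball (0 : E) r, ENNReal.ofReal ((f x) ^ 2) ∂μ) ≤
      2 * (V⁻¹ * (ENNReal.ofReal (s ^ p) * I)) +
      2 * (V⁻¹ * (ENNReal.ofReal L) ^ 2) := by
    have hcan : V⁻¹ * V = 1 := ENNReal.inv_mul_cancel hV0 hVtop
    have hVinvtop : V⁻¹ ≠ ⊤ := ENNReal.inv_ne_top.2 hV0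
    have pt : ∀ x ∈ ball (0 : E) r, ENNReal.ofReal ((f x) ^ 2) ≤
        2 * V⁻¹ * Q x + (2 * (V⁻¹ * ENNReal.ofReal L * V⁻¹)) * W x := by
      intro x hx
      have h0 : (f x) ^ 2 ≤ 2 * (f x - F x) ^ 2 + 2 * (F x) ^ 2 := by
        nlinarith [sq_nonneg (f x - 2 * F x)]
      calc ENNReal.ofReal ((f x) ^ 2)
          ≤ ENNReal.ofReal (2 * (f x - F x) ^ 2 + 2 * (F x) ^ 2) :=
            ENNReal.ofReal_le_ofReal h0
        _ = 2 * ENNReal.ofReal ((f x - F x) ^ 2) + 2 * ENNReal.ofReal ((F x) ^ 2) := by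
            rw [ENNReal.ofReal_add (by positivity) (by positivity),
              ENNReal.ofReal_mul (by norm_num), ENNReal.ofReal_mul (by norm_num)]
            norm_num
        _ ≤ 2 * (V⁻¹ * Q x) + 2 * ((V⁻¹ * ENNReal.ofReal L) * (V⁻¹ * W x)) := by
            gcongr
            · exact step1 x hx
            · exact step2 x hx
        _ = 2 * V⁻¹ * Q x + (2 * (V⁻¹ * ENNReal.ofReal L * V⁻¹)) * W x := by
            ring
    calc ∫⁻ x in ball (0 : E) r, ENNReal.ofReal ((f x) ^ 2) ∂μ
        ≤ ∫⁻ x in ball (0 : E) r,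
            (2 * V⁻¹ * Q x + (2 * (V⁻¹ * ENNReal.ofReal L * V⁻¹)) * W x) ∂μ :=
          setLIntegral_mono' measurableSet_ball pt
      _ = 2 * V⁻¹ * (∫⁻ x in ball (0 : E) r, Q x ∂μ) +
          (2 * (V⁻¹ * ENNReal.ofReal L * V⁻¹)) * (∫⁻ x in ball (0 : E) r, W x ∂μ) := by
          rw [lintegral_add_left (hQm.const_mul _)]
          rw [lintegral_const_mul' _ _ (by
            exact ENNReal.mul_ne_top (by norm_num) hVinvtop)]
          rw [lintegral_const_mul' _ _ (by
            exact ENNReal.mul_ne_top (by norm_num)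
              (ENNReal.mul_ne_top (ENNReal.mul_ne_top hVinvtop ENNReal.ofReal_ne_top)
                hVinvtop))]
      _ ≤ 2 * V⁻¹ * (ENNReal.ofReal (s ^ p) * I) +
          (2 * (V⁻¹ * ENNReal.ofReal L * V⁻¹)) * (V * ENNReal.ofReal L) := by
          gcongr
      _ = 2 * (V⁻¹ * (ENNReal.ofReal (s ^ p) * I)) +
          2 * (V⁻¹ * (ENNReal.ofReal L) ^ 2) := by
          congr 1
          · ring
          · calc (2 * (V⁻¹ * ENNReal.ofReal L * V⁻¹)) * (V * ENNReal.ofReal L)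
                = (V⁻¹ * V) * (2 * (V⁻¹ * (ENNReal.ofReal L) ^ 2)) := by ring
              _ = 2 * (V⁻¹ * (ENNReal.ofReal L) ^ 2) := by rw [hcan, one_mul]
  -- convert to real numbers
  have hA : ∫ x in ball (0 : E) r, (f x) ^ 2 ∂μ =
      (∫⁻ x in ball (0 : E) r, ENNReal.ofReal ((f x) ^ 2) ∂μ).toReal := by
    rw [integral_eq_lintegral_of_nonneg_ae
      (Filter.Eventually.of_forall fun x => sq_nonneg _)
      ((hf.pow_const 2).aestronglyMeasurable)]
  have hVinvtop : V⁻¹ ≠ ⊤ := ENNReal.inv_ne_top.2 hV0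
  have hBtop : 2 * (V⁻¹ * (ENNReal.ofReal (s ^ p) * I)) +
      2 * (V⁻¹ * (ENNReal.ofReal L) ^ 2) ≠ ⊤ := by
    refine ENNReal.add_ne_top.2 ⟨?_, ?_⟩
    · exact ENNReal.mul_ne_top (by norm_num)
        (ENNReal.mul_ne_top hVinvtop (ENNReal.mul_ne_top ENNReal.ofReal_ne_top hI))
    · exact ENNReal.mul_ne_top (by norm_num)
        (ENNReal.mul_ne_top hVinvtop (by
          rw [pow_two]
          exact ENNReal.mul_ne_top ENNReal.ofReal_ne_top ENNReal.ofReal_ne_top))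
  rw [hA]
  refine (ENNReal.toReal_mono hBtop main).trans (le_of_eq ?_)
  rw [ENNReal.toReal_add
    (ENNReal.mul_ne_top (by norm_num)
      (ENNReal.mul_ne_top hVinvtop (ENNReal.mul_ne_top ENNReal.ofReal_ne_top hI)))
    (ENNReal.mul_ne_top (by norm_num)
      (ENNReal.mul_ne_top hVinvtop (by
        rw [pow_two]
        exact ENNReal.mul_ne_top ENNReal.ofReal_ne_top ENNReal.ofReal_ne_top)))]
  simp only [ENNReal.toReal_mul, ENNReal.toReal_pow, ENNReal.toReal_inv,
    ENNReal.toReal_ofReal hL0, ENNReal.toReal_ofReal (Real.rpow_nonneg hs.le p),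
    ENNReal.toReal_ofNat]
  ring

/-- Local super Poincaré inequality for the truncated fractional Dirichlet form:
there is a constant `c` depending only on `d` such that for every `0 < α < 2`,
`0 < s ≤ 1 ≤ r`, and every measurable `f` with finite truncated form and
integrable on `B(0, r+1)`,
`∫_{B(0,r)} f² ≤ c [ s^{d+α}/|B(0,s)| · ∫∫_{|x-y|≤s} (f(x)-f(y))²|x-y|^{-d-α}
  + |B(0,s)|⁻¹ (∫_{B(0,r+1)} |f|)² ]`. -/
theorem local_super_poincare_fractional (d : ℕ) (hd : 1 ≤ d) :
    ∃ c > (0 : ℝ), ∀ (α s r : ℝ), 0 < α → α < 2 → 0 < s → s ≤ 1 → 1 ≤ r →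
      ∀ f : EuclideanSpace ℝ (Fin d) → ℝ, Measurable f →
      (∫⁻ x, ∫⁻ y in closedBall x s,
          ENNReal.ofReal ((f x - f y) ^ 2 * ‖x - y‖ ^ (-((d : ℝ) + α)))
            ∂volume ∂volume) ≠ ⊤ →
      IntegrableOn f (ball (0 : EuclideanSpace ℝ (Fin d)) (r + 1)) volume →
      ∫ x in ball (0 : EuclideanSpace ℝ (Fin d)) r, (f x) ^ 2 ≤
        c * (s ^ ((d : ℝ) + α) / (volume (ball (0 : EuclideanSpace ℝ (Fin d)) s)).toReal *
              (∫⁻ x, ∫⁻ y in closedBall x s,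
                ENNReal.ofReal ((f x - f y) ^ 2 * ‖x - y‖ ^ (-((d : ℝ) + α)))
                  ∂volume ∂volume).toReal +
            (volume (ball (0 : EuclideanSpace ℝ (Fin d)) s)).toReal⁻¹ *
              (∫ z in ball (0 : EuclideanSpace ℝ (Fin d)) (r + 1), |f z|) ^ 2) := by
  refine ⟨2, two_pos, ?_⟩
  intro α s r hα hα2 hs hs1 hr f hf hI hfi
  exact local_super_poincare_aux volume ((d : ℝ) + α) s r (by positivity) hs hs1 hr
    f hf hI hfi
end

section
/- Let d ≥ 1, α > 0, k_0 > 0 with d·k_0/α > 2. Let r_n = n^{-k_0/α + 1/d} and x_n ∈ ℝ^d with |x_n| = n^{k_0} for n ≥ 1, and A = ⋃_{n≥1} B(x_n, r_n). Then for every ε with 2/k_0 < ε, there exists a constant C > 0 such that for all R ≥ 2, |{x ∈ A : |x| ≥ R}| ≤ C · R^{-(d/α - ε)}. -/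
open MeasureTheory Metric
open scoped ENNReal

/-- Measure decay of the union of shrinking balls `A = ⋃_{n≥1} B(x_n, r_n)` with
`|x_n| = n^{k₀}` and `r_n = n^{-k₀/α + 1/d}`: for every `ε > 2/k₀` there is `C > 0`
with `|{x ∈ A : |x| ≥ R}| ≤ C R^{-(d/α - ε)}` for all `R ≥ 2`. -/
theorem union_balls_tail_measure (d : ℕ) (hd : 1 ≤ d) (α k₀ : ℝ) (hα : 0 < α)
    (hk₀ : 0 < k₀) (hdk : 2 < (d : ℝ) * k₀ / α)
    (x : ℕ → EuclideanSpace ℝ (Fin d)) (hx : ∀ n : ℕ, 1 ≤ n → ‖x n‖ = (n : ℝ) ^ k₀)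
    (A : Set (EuclideanSpace ℝ (Fin d)))
    (hA : A = ⋃ n ∈ {n : ℕ | 1 ≤ n}, ball (x n) ((n : ℝ) ^ (-k₀ / α + 1 / (d : ℝ)))) :
    ∀ ε : ℝ, 2 / k₀ < ε → ∃ C > (0 : ℝ), ∀ R : ℝ, 2 ≤ R →
      volume {y ∈ A | R ≤ ‖y‖} ≤ ENNReal.ofReal (C * R ^ (-((d : ℝ) / α - ε))) := by
  intro ε hε
  have hd0 : (0:ℝ) < d := by exact_mod_cast hd
  haveI : Nonempty (Fin d) := Fin.pos_iff_nonempty.mp hd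
  have hαne : α ≠ 0 := ne_of_gt hα
  have hdne : (d:ℝ) ≠ 0 := ne_of_gt hd0
  have h2α : 2 * α < (d:ℝ) * k₀ := by
    rw [lt_div_iff₀ hα] at hdk; linarith
  have hk₀ε : 2 < k₀ * ε := by
    rw [div_lt_iff₀ hk₀] at hε; linarith
  have h1 : (1:ℝ)/d ≤ k₀/α := by
    rw [div_le_div_iff₀ hd0 hα]; nlinarith
  have hρneg : -k₀ / α + 1 / (d:ℝ) ≤ 0 := by
    rw [neg_div]; linarith
  set ρ : ℝ := -k₀ / α + 1 / d with hρdef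
  set β : ℝ := (d:ℝ) * k₀ / α - 1 with hβdef
  set η : ℝ := min (k₀ * ε - 2) ((d:ℝ) * k₀ / α - 2) / 2 with hηdef
  have hη0 : 0 < η := by
    apply div_pos _ two_pos
    exact lt_min (by linarith) (by linarith)
  have hη1 : η ≤ (k₀ * ε - 2) / 2 := by
    rw [hηdef]; gcongr; exact min_le_left _ _
  have hη2 : η ≤ ((d:ℝ) * k₀ / α - 2) / 2 := by
    rw [hηdef]; gcongr; exact min_le_right _ _
  set γ : ℝ := (β - 1 - η) / k₀ with hγdef
  have hβ1η : 0 ≤ β - 1 - η := by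
    rw [hβdef]; linarith
  have hγ0 : 0 ≤ γ := div_nonneg hβ1η hk₀.le
  have hγε : (d:ℝ) / α - ε ≤ γ := by
    rw [hγdef, hβdef, le_div_iff₀ hk₀]
    have hda : (d:ℝ) / α * k₀ = (d:ℝ) * k₀ / α := by ring
    nlinarith
  -- the exponent appearing in the statement
  set e : ℝ := -((d : ℝ) / α - ε) with hedef
  have hγe : -γ ≤ e := by rw [hedef]; linarith
  -- constants
  set c : ℝ≥0∞ := volume (ball (0 : EuclideanSpace ℝ (Fin d)) 1) with hcdef
  have hc : c ≠ ⊤ := measure_ball_lt_top.ne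
  have hSum : Summable (fun n : ℕ => (n : ℝ) ^ (-(1 + η))) :=
    Real.summable_nat_rpow.mpr (by linarith)
  set S : ℝ≥0∞ := ∑' n : ℕ, ENNReal.ofReal ((n : ℝ) ^ (-(1 + η))) with hSdef
  have hS : S ≠ ⊤ := by
    rw [hSdef, ← ENNReal.ofReal_tsum_of_nonneg (fun n => Real.rpow_nonneg (Nat.cast_nonneg n) _) hSum]
    exact ENNReal.ofReal_ne_top
  set K : ℝ≥0∞ := c * S * ENNReal.ofReal (2 ^ γ) with hKdef
  have hK : K ≠ ⊤ := ENNReal.mul_ne_top (ENNReal.mul_ne_top hc hS) ENNReal.ofReal_ne_top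
  refine ⟨K.toReal + 1, by positivity, ?_⟩
  intro R hR
  have hR1 : (1:ℝ) ≤ R := by linarith
  have hR2 : (1:ℝ) ≤ R / 2 := by linarith
  -- the set of relevant indices
  set T : Set ℕ := {n : ℕ | 1 ≤ n ∧ R / 2 ≤ (n : ℝ) ^ k₀} with hTdef
  have hsub : {y ∈ A | R ≤ ‖y‖} ⊆ ⋃ n ∈ T, ball (x n) ((n : ℝ) ^ ρ) := by
    rintro y ⟨hyA, hyR⟩
    rw [hA] at hyA
    simp only [Set.mem_iUnion, Set.mem_setOf_eq] at hyA ⊢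
    obtain ⟨n, hn1, hyn⟩ := hyA
    refine ⟨n, ⟨hn1, ?_⟩, hyn⟩
    have hn1' : (1:ℝ) ≤ n := by exact_mod_cast hn1
    have hrle : (n:ℝ) ^ ρ ≤ 1 := Real.rpow_le_one_of_one_le_of_nonpos hn1' hρneg
    have hdist : ‖y - x n‖ < (n:ℝ) ^ ρ := by
      rw [← dist_eq_norm]; exact mem_ball.1 hyn
    have hnorm : ‖y‖ ≤ ‖y - x n‖ + ‖x n‖ := by
      calc ‖y‖ = ‖(y - x n) + x n‖ := by rw [sub_add_cancel]
        _ ≤ ‖y - x n‖ + ‖x n‖ := norm_add_le _ _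
    rw [hx n hn1] at hnorm
    linarith
  have hterm : ∀ n : T, volume (ball (x (n:ℕ)) (((n:ℕ):ℝ) ^ ρ)) ≤
      ENNReal.ofReal (((n:ℕ):ℝ) ^ (-(1 + η))) * (ENNReal.ofReal (2 ^ γ * R ^ e) * c) := by
    rintro ⟨n, hn1, hnR⟩
    show volume (ball (x n) ((n:ℝ) ^ ρ)) ≤
      ENNReal.ofReal ((n:ℝ) ^ (-(1 + η))) * (ENNReal.ofReal (2 ^ γ * R ^ e) * c)
    have hn1' : (1:ℝ) ≤ n := by exact_mod_cast hn1
    have hn0 : (0:ℝ) < n := lt_of_lt_of_le one_pos hn1'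
    have hrnn : 0 ≤ (n:ℝ) ^ ρ := Real.rpow_nonneg hn0.le _
    have hb : (0:ℝ) ≤ (n:ℝ) ^ (-(1 + η)) := Real.rpow_nonneg hn0.le _
    -- real inequality: (n^ρ)^d ≤ n^{-(1+η)} * (2^γ * R^e)
    have e1 : ((n:ℝ) ^ ρ) ^ d = (n:ℝ) ^ (ρ * d) := by
      rw [← Real.rpow_natCast ((n:ℝ) ^ ρ) d, ← Real.rpow_mul hn0.le]
    have e2 : ρ * d = -(1 + η) + -(β - 1 - η) := by
      rw [hρdef, hβdef]; field_simp; ring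
    have e3 : (n:ℝ) ^ (ρ * (d:ℝ)) = (n:ℝ) ^ (-(1 + η)) * (n:ℝ) ^ (-(β - 1 - η)) := by
      rw [e2, Real.rpow_add hn0]
    have e4 : (n:ℝ) ^ (-(β - 1 - η)) = ((n:ℝ) ^ k₀) ^ (-γ) := by
      rw [← Real.rpow_mul hn0.le, hγdef]
      congr 1
      field_simp
    have e5 : ((n:ℝ) ^ k₀) ^ (-γ) ≤ (R / 2) ^ (-γ) :=
      Real.rpow_le_rpow_of_nonpos (by linarith) hnR (neg_nonpos.mpr hγ0)
    have e6 : (R / 2) ^ (-γ) = R ^ (-γ) * 2 ^ γ := by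
      rw [Real.div_rpow (by linarith) (by norm_num), Real.rpow_neg (by norm_num : (0:ℝ) ≤ 2),
        div_inv_eq_mul]
    have e7 : R ^ (-γ) ≤ R ^ e := Real.rpow_le_rpow_of_exponent_le hR1 hγe
    have key : ((n:ℝ) ^ ρ) ^ d ≤ (n:ℝ) ^ (-(1 + η)) * (2 ^ γ * R ^ e) :=
      calc ((n:ℝ) ^ ρ) ^ d = (n:ℝ) ^ (-(1 + η)) * ((n:ℝ) ^ k₀) ^ (-γ) := by
            rw [e1, e3, e4]
        _ ≤ (n:ℝ) ^ (-(1 + η)) * (R / 2) ^ (-γ) := mul_le_mul_of_nonneg_left e5 hb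
        _ = (n:ℝ) ^ (-(1 + η)) * (R ^ (-γ) * 2 ^ γ) := by rw [e6]
        _ ≤ (n:ℝ) ^ (-(1 + η)) * (R ^ e * 2 ^ γ) :=
            mul_le_mul_of_nonneg_left (mul_le_mul_of_nonneg_right e7 (by positivity)) hb
        _ = (n:ℝ) ^ (-(1 + η)) * (2 ^ γ * R ^ e) := by ring
    calc volume (ball (x n) ((n:ℝ) ^ ρ))
        = ENNReal.ofReal (((n:ℝ) ^ ρ) ^ d) * c := by
          rw [hcdef, Measure.addHaar_ball volume (x n) hrnn, finrank_euclideanSpace_fin]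
      _ ≤ ENNReal.ofReal ((n:ℝ) ^ (-(1 + η)) * (2 ^ γ * R ^ e)) * c :=
          mul_le_mul_left (ENNReal.ofReal_le_ofReal key) c
      _ = ENNReal.ofReal ((n:ℝ) ^ (-(1 + η))) * (ENNReal.ofReal (2 ^ γ * R ^ e) * c) := by
          rw [ENNReal.ofReal_mul hb, mul_assoc]
  calc volume {y ∈ A | R ≤ ‖y‖}
      ≤ volume (⋃ n ∈ T, ball (x n) ((n : ℝ) ^ ρ)) := measure_mono hsub
    _ ≤ ∑' n : T, volume (ball (x (n:ℕ)) (((n:ℕ):ℝ) ^ ρ)) :=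
        measure_biUnion_le volume (Set.to_countable T) _
    _ ≤ ∑' n : T, ENNReal.ofReal (((n:ℕ):ℝ) ^ (-(1 + η))) * (ENNReal.ofReal (2 ^ γ * R ^ e) * c) :=
        ENNReal.tsum_le_tsum hterm
    _ = (∑' n : T, ENNReal.ofReal (((n:ℕ):ℝ) ^ (-(1 + η)))) * (ENNReal.ofReal (2 ^ γ * R ^ e) * c) :=
        ENNReal.tsum_mul_right
    _ ≤ S * (ENNReal.ofReal (2 ^ γ * R ^ e) * c) := by
        refine mul_le_mul_left ?_ _
        rw [hSdef]
        exact ENNReal.tsum_comp_le_tsum_of_injective Subtype.val_injective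
          (fun m : ℕ => ENNReal.ofReal ((m : ℝ) ^ (-(1 + η))))
    _ = K * ENNReal.ofReal (R ^ e) := by
        rw [ENNReal.ofReal_mul (by positivity : (0:ℝ) ≤ 2 ^ γ), hKdef]; ring
    _ ≤ ENNReal.ofReal (K.toReal + 1) * ENNReal.ofReal (R ^ e) := by
        refine mul_le_mul_left ?_ _
        conv_lhs => rw [← ENNReal.ofReal_toReal hK]
        exact ENNReal.ofReal_le_ofReal (by linarith [ENNReal.toReal_nonneg (a := K)])
    _ = ENNReal.ofReal ((K.toReal + 1) * R ^ e) :=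
        (ENNReal.ofReal_mul (by positivity)).symm
end
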